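/- There exists a universal constant c > 0 such that for every positive integer n there exist functions h_1,…,h_n : 𝒞_n → ℝ satisfying 2^{−n} Σ_{δ∈𝒞_n} ‖Σ_{i=1}^n δ_i 𝔈_i h_i‖_{L_1(𝒞_n;ℝ)} ≥ c √n · 2^{−n} Σ_{δ∈𝒞_n} ‖Σ_{i=1}^n δ_i h_i‖_{L_1(𝒞_n;ℝ)}, and the right-hand side is strictly positive. -/

import Mathlib

noncomputable section

open Finset

/-- The sign `±1` attached to a boolean coordinate of the discrete cube. -/
def sgn (b : Bool) : ℝ := if b then 1 else -1

variable {X : Type*} [NormedAddCommGroup X] [NormedSpace ℝ X]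

/-- `L_p` norm of `f : 𝒞_n → X` with respect to the uniform probability measure. -/
def cubeLpNorm (n : ℕ) (p : ℝ) (f : (Fin n → Bool) → X) : ℝ :=
  (((2 : ℝ) ^ n)⁻¹ * ∑ ε : Fin n → Bool, ‖f ε‖ ^ p) ^ (1 / p)

/-- Conditional expectation given the coordinates in `S`: average of `f η` over all
`η` agreeing with `ε` on `S`. -/
def cubeCondExp (n : ℕ) (S : Finset (Fin n)) (f : (Fin n → Bool) → X) :
    (Fin n → Bool) → X := fun ε =>
  ((2 : ℝ) ^ (n - S.card))⁻¹ •
    ∑ η ∈ univ.filter (fun η : Fin n → Bool => ∀ j ∈ S, η j = ε j), f η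

/-- The set of the first `i` coordinates (`0`-based). -/
def firstIdx (n i : ℕ) : Finset (Fin n) := univ.filter fun j => (j : ℕ) < i

/-- `𝔈_i`: conditioning on the first `i` coordinates. -/
def Ei (n i : ℕ) (f : (Fin n → Bool) → X) : (Fin n → Bool) → X :=
  cubeCondExp n (firstIdx n i) f

/-- `𝔈_i^π`: conditioning on the coordinates `π(1),…,π(i)`. -/
def Epi (n : ℕ) (π : Equiv.Perm (Fin n)) (i : ℕ) (f : (Fin n → Bool) → X) :
    (Fin n → Bool) → X :=
  cubeCondExp n ((firstIdx n i).image π) f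

/-- `∂_i`: the `i`-th discrete partial derivative. -/
def cubeDeriv (n : ℕ) (i : Fin n) (f : (Fin n → Bool) → X) : (Fin n → Bool) → X :=
  fun ε => (2 : ℝ)⁻¹ • (f ε - f (Function.update ε i (!(ε i))))

/-- `X` satisfies the hypercube Stein inequality with constant `s` for exponent `p`. -/
def SteinIneq (X : Type*) [NormedAddCommGroup X] [NormedSpace ℝ X] (p s : ℝ) : Prop :=
  ∀ m : ℕ, 0 < m → ∀ (π : Equiv.Perm (Fin m)) (g : Fin m → (Fin m → Bool) → X),
    (((2 : ℝ) ^ m)⁻¹ * ∑ δ : Fin m → Bool,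
        (cubeLpNorm m p fun ε => ∑ i : Fin m, sgn (δ i) • Epi m π ((i : ℕ) + 1) (g i) ε) ^ p) ^ (1 / p)
      ≤ s * (((2 : ℝ) ^ m)⁻¹ * ∑ δ : Fin m → Bool,
        (cubeLpNorm m p fun ε => ∑ i : Fin m, sgn (δ i) • g i ε) ^ p) ^ (1 / p)

/-- `X` satisfies the hypercube UMD⁻ inequality with constant `b` for exponent `p`. -/
def UMDminusIneq (X : Type*) [NormedAddCommGroup X] [NormedSpace ℝ X] (p b : ℝ) : Prop :=
  ∀ m : ℕ, 0 < m → ∀ (π : Equiv.Perm (Fin m)) (d : Fin m → (Fin m → Bool) → X),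
    (∀ i : Fin m, Epi m π ((i : ℕ) + 1) (d i) = d i ∧ Epi m π (i : ℕ) (d i) = 0) →
    cubeLpNorm m p (fun ε => ∑ i : Fin m, d i ε)
      ≤ b * (((2 : ℝ) ^ m)⁻¹ * ∑ δ : Fin m → Bool,
        (cubeLpNorm m p fun ε => ∑ i : Fin m, sgn (δ i) • d i ε) ^ p) ^ (1 / p)

/-- The Walsh function `w_A`. -/
def walsh (n : ℕ) (A : Finset (Fin n)) (ε : Fin n → Bool) : ℝ := ∏ i ∈ A, sgn (ε i)

/-- The Walsh coefficient `f̂(A)`. -/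
def walshCoeff (n : ℕ) (f : (Fin n → Bool) → X) (A : Finset (Fin n)) : X :=
  ((2 : ℝ) ^ n)⁻¹ • ∑ ε : Fin n → Bool, walsh n A ε • f ε

/-- `Δ⁻¹∂_i f = Σ_{A ∋ i} |A|⁻¹ f̂(A) w_A`. -/
def invLapDeriv (n : ℕ) (i : Fin n) (f : (Fin n → Bool) → X) : (Fin n → Bool) → X :=
  fun ε => ∑ A ∈ univ.filter (fun A : Finset (Fin n) => i ∈ A),
    ((A.card : ℝ)⁻¹ * walsh n A ε) • walshCoeff n f A


/-! ### Auxiliary material for the proof -/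

/-- all-true point. -/
def allT (n : ℕ) : Fin n → Bool := fun _ => true

/-- the witness: indicator of the all-true point. -/
def hh (n : ℕ) : (Fin n → Bool) → ℝ := fun ε => if ε = allT n then 1 else 0

/-- prefix property: the first `k+1` coordinates are `true`. -/
def Pp (n k : ℕ) (ε : Fin n → Bool) : Prop := ∀ j : Fin n, (j : ℕ) ≤ k → ε j = true

instance (n k : ℕ) (ε : Fin n → Bool) : Decidable (Pp n k ε) := by
  unfold Pp; infer_instance

lemma sgn_mul_self' (b : Bool) : sgn b * sgn b = 1 := by cases b <;> simp [sgn]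

lemma abs_sgn_sub' (b : Bool) : |sgn b - sgn (!b)| = 2 := by cases b <;> norm_num [sgn]

lemma card_filter_lt' (n k : ℕ) (hk : k ≤ n) :
    (univ.filter fun j : Fin n => (j : ℕ) < k).card = k := by
  rcases eq_or_lt_of_le hk with rfl | hk'
  · rw [Finset.filter_true_of_mem (fun j _ => j.isLt)]
    simp
  · have : (univ.filter fun j : Fin n => (j : ℕ) < k) = Finset.Iio (⟨k, hk'⟩ : Fin n) := by
      ext j; simp [Fin.lt_def]
    rw [this, Fin.card_Iio]

lemma card_filter_le' (n k : ℕ) (hk : k < n) :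
    (univ.filter fun j : Fin n => (j : ℕ) ≤ k).card = k + 1 := by
  have : (univ.filter fun j : Fin n => (j : ℕ) ≤ k)
      = (univ.filter fun j : Fin n => (j : ℕ) < k + 1) := by
    ext j; simp [Nat.lt_succ_iff]
  rw [this, card_filter_lt' n (k+1) hk]

lemma prefix_count' (n k : ℕ) (hk : k < n) :
    (univ.filter fun ε : Fin n → Bool => Pp n k ε).card = 2 ^ (n - (k + 1)) := by
  have hset : (univ.filter fun ε : Fin n → Bool => Pp n k ε)
      = Fintype.piFinset (fun j : Fin n => if (j : ℕ) ≤ k then {true} else Finset.univ) := by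
    ext ε
    simp only [Finset.mem_filter, Finset.mem_univ, true_and, Fintype.mem_piFinset]
    simp only [Pp]
    constructor
    · intro hε j
      split_ifs with hj
      · simp [hε j hj]
      · simp
    · intro hε j hj
      have := hε j
      rw [if_pos hj] at this
      simpa using this
  rw [hset, Fintype.card_piFinset]
  have : ∀ j : Fin n, ((if (j : ℕ) ≤ k then ({true} : Finset Bool) else Finset.univ).card)
      = if (j : ℕ) ≤ k then 1 else 2 := by
    intro j; split_ifs <;> simp
  rw [Finset.prod_congr rfl (fun j _ => this j)]
  rw [Finset.prod_ite, Finset.prod_const, Finset.prod_const, one_pow, one_mul]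
  congr 1
  have := Finset.card_filter_add_card_filter_not
    (s := (univ : Finset (Fin n))) (p := fun j : Fin n => (j:ℕ) ≤ k)
  rw [card_filter_le' n k hk] at this
  simp only [Finset.card_univ, Fintype.card_fin] at this
  omega

lemma sum_sgn_mul_sgn' (n : ℕ) (i j : Fin n) (hij : i ≠ j) :
    ∑ δ : Fin n → Bool, sgn (δ i) * sgn (δ j) = 0 := by
  apply Finset.sum_ninvolution (fun δ => Function.update δ i (!(δ i)))
  · intro δ
    rw [Function.update_self, Function.update_of_ne hij.symm]
    cases δ i <;> cases δ j <;> simp [sgn]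
  · intro δ _ hc
    have := congrFun hc i
    rw [Function.update_self] at this
    cases h : δ i <;> rw [h] at this <;> simp at this
  · intro δ; exact Finset.mem_univ _
  · intro δ
    simp [Function.update_idem, Function.update_eq_self]

lemma sum_S_sq' (n : ℕ) :
    ∑ δ : Fin n → Bool, (∑ i : Fin n, sgn (δ i)) ^ 2 = (n : ℝ) * 2 ^ n := by
  have key : ∀ i j : Fin n, ∑ δ : Fin n → Bool, sgn (δ i) * sgn (δ j)
      = if i = j then (2 : ℝ) ^ n else 0 := by
    intro i j
    split_ifs with hij
    · subst hij
      rw [Finset.sum_congr rfl (fun δ _ => sgn_mul_self' (δ i)), Finset.sum_const]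
      simp [Finset.card_univ]
    · exact sum_sgn_mul_sgn' n i j hij
  calc ∑ δ : Fin n → Bool, (∑ i : Fin n, sgn (δ i)) ^ 2
      = ∑ δ : Fin n → Bool, ∑ i : Fin n, ∑ j : Fin n, sgn (δ i) * sgn (δ j) := by
        refine Finset.sum_congr rfl fun δ _ => ?_
        rw [sq, Finset.sum_mul_sum]
    _ = ∑ i : Fin n, ∑ j : Fin n, ∑ δ : Fin n → Bool, sgn (δ i) * sgn (δ j) := by
        rw [Finset.sum_comm]
        exact Finset.sum_congr rfl fun i _ => Finset.sum_comm
    _ = ∑ i : Fin n, ∑ j : Fin n, if i = j then (2:ℝ)^n else 0 := by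
        exact Finset.sum_congr rfl fun i _ => Finset.sum_congr rfl fun j _ => key i j
    _ = (n : ℝ) * 2 ^ n := by
        simp [Finset.sum_ite_eq, Finset.card_univ, mul_comm]

lemma sum_abs_S_le' (n : ℕ) :
    ∑ δ : Fin n → Bool, |∑ i : Fin n, sgn (δ i)| ≤ 2 ^ n * Real.sqrt n := by
  have hnn : (0:ℝ) ≤ ∑ δ : Fin n → Bool, |∑ i : Fin n, sgn (δ i)| :=
    Finset.sum_nonneg fun δ _ => abs_nonneg _
  have hcs := Finset.sum_mul_sq_le_sq_mul_sq Finset.univ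
    (fun δ : Fin n → Bool => |∑ i : Fin n, sgn (δ i)|) (fun _ => (1:ℝ))
  simp only [mul_one, one_pow, Finset.sum_const, Finset.card_univ, sq_abs,
    Fintype.card_fun, Fintype.card_bool, Fintype.card_fin, nsmul_eq_mul, mul_one,
    Nat.cast_pow, Nat.cast_ofNat] at hcs
  rw [sum_S_sq' n] at hcs
  have h2 : (∑ δ : Fin n → Bool, |∑ i : Fin n, sgn (δ i)|) ^ 2
      ≤ (2 ^ n * Real.sqrt n) ^ 2 := by
    rw [mul_pow, Real.sq_sqrt (by positivity : (0:ℝ) ≤ (n:ℝ))]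
    calc (∑ δ : Fin n → Bool, |∑ i : Fin n, sgn (δ i)|) ^ 2
        ≤ (n : ℝ) * 2 ^ n * 2 ^ n := hcs
      _ = ((2:ℝ) ^ n) ^ 2 * n := by ring
  exact (pow_le_pow_iff_left₀ hnn (by positivity) (by norm_num)).mp h2

/-- the conditional expectations of `hh` -/
lemma Ei_hh (n : ℕ) (i : Fin n) (ε : Fin n → Bool) :
    Ei n ((i : ℕ) + 1) (hh n) ε
      = ((2:ℝ) ^ (n - ((i:ℕ)+1)))⁻¹ * (if Pp n i ε then 1 else 0) := by
  unfold Ei cubeCondExp firstIdx hh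
  rw [card_filter_lt' n ((i:ℕ)+1) i.isLt, smul_eq_mul]
  congr 1
  rw [Finset.sum_ite_eq' (univ.filter fun η : Fin n → Bool =>
      ∀ j ∈ univ.filter (fun j : Fin n => (j:ℕ) < (i:ℕ)+1), η j = ε j) (allT n) (fun _ => 1)]
  apply if_congr _ rfl rfl
  simp only [Finset.mem_filter, Finset.mem_univ, true_and, allT, Pp, Nat.lt_succ_iff]
  constructor
  · intro hc j hj; exact (hc j hj).symm
  · intro hc j hj; exact (hc j hj).symm

/-- the summed conditional expectations -/
def Uu (n : ℕ) (δ ε : Fin n → Bool) : ℝ :=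
  ∑ i : Fin n, sgn (δ i) * (((2:ℝ) ^ (n - ((i:ℕ)+1)))⁻¹ * if Pp n i ε then 1 else 0)

/-- pairing bound -/
lemma pairing (n : ℕ) (ε : Fin n → Bool) (t : Fin n) (hP : Pp n t ε) :
    (2:ℝ) ^ ((t:ℕ) + 1) ≤ ∑ δ : Fin n → Bool, |Uu n δ ε| := by
  set σ : (Fin n → Bool) → (Fin n → Bool) := fun δ => Function.update δ t (!(δ t)) with hσ
  have hinv : ∀ δ, σ (σ δ) = δ := by
    intro δ; simp [hσ, Function.update_idem, Function.update_eq_self]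
  have hbij : Function.Bijective σ := Function.Involutive.bijective hinv
  have hsum : ∑ δ : Fin n → Bool, |Uu n (σ δ) ε| = ∑ δ : Fin n → Bool, |Uu n δ ε| :=
    Function.Bijective.sum_comp hbij (fun δ => |Uu n δ ε|)
  have hdiff : ∀ δ, Uu n δ ε - Uu n (σ δ) ε
      = (sgn (δ t) - sgn (!(δ t))) * ((2:ℝ) ^ (n - ((t:ℕ)+1)))⁻¹ := by
    intro δ
    unfold Uu
    rw [← Finset.sum_sub_distrib]
    rw [Finset.sum_eq_single_of_mem t (Finset.mem_univ t)]
    · rw [if_pos hP]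
      have : σ δ t = !(δ t) := Function.update_self _ _ _
      rw [this, mul_one, ← sub_mul]
    · intro i _ hit
      have : σ δ i = δ i := Function.update_of_ne hit _ _
      rw [this, sub_self]
  have hpos : (0:ℝ) < ((2:ℝ) ^ (n - ((t:ℕ)+1)))⁻¹ := by positivity
  have key : 2 * ∑ δ : Fin n → Bool, |Uu n δ ε|
      ≥ ∑ δ : Fin n → Bool, (2 * ((2:ℝ) ^ (n - ((t:ℕ)+1)))⁻¹) := by
    calc 2 * ∑ δ : Fin n → Bool, |Uu n δ ε|
        = ∑ δ : Fin n → Bool, (|Uu n δ ε| + |Uu n (σ δ) ε|) := by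
          rw [Finset.sum_add_distrib, hsum, two_mul]
      _ ≥ ∑ δ : Fin n → Bool, (2 * ((2:ℝ) ^ (n - ((t:ℕ)+1)))⁻¹) := by
          apply Finset.sum_le_sum
          intro δ _
          have h1 : |Uu n δ ε - Uu n (σ δ) ε| ≤ |Uu n δ ε| + |Uu n (σ δ) ε| := abs_sub _ _
          rw [hdiff δ, abs_mul, abs_sgn_sub', abs_of_pos hpos] at h1
          exact h1
  rw [Finset.sum_const, Finset.card_univ] at key
  have hcard : Fintype.card (Fin n → Bool) = 2 ^ n := by
    simp [Fintype.card_fun]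
  rw [hcard] at key
  have hpow : (2:ℝ) ^ (n - ((t:ℕ)+1)) * 2 ^ ((t:ℕ)+1) = 2 ^ n :=
    pow_sub_mul_pow 2 t.isLt
  have key2 : (2:ℝ)^n * ((2:ℝ) ^ (n - ((t:ℕ)+1)))⁻¹ ≤ ∑ δ : Fin n → Bool, |Uu n δ ε| := by
    have := key
    rw [nsmul_eq_mul] at this
    push_cast at this
    nlinarith [this]
  calc (2:ℝ) ^ ((t:ℕ)+1) = (2:ℝ)^n * ((2:ℝ) ^ (n - ((t:ℕ)+1)))⁻¹ := by
        rw [← hpow]; field_simp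
    _ ≤ _ := key2

/-- the prefix-length counting function -/
def Mm (n : ℕ) (ε : Fin n → Bool) : ℕ :=
  (univ.filter fun j : Fin n => ∀ k : Fin n, (k:ℕ) ≤ (j:ℕ) → ε k = true).card

lemma Mm_le (n : ℕ) (ε : Fin n → Bool) : Mm n ε ≤ n :=
  le_trans (Finset.card_filter_le _ _) (by simp)

lemma lt_Mm_iff (n : ℕ) (ε : Fin n → Bool) (k : ℕ) (hk : k < n) :
    k < Mm n ε ↔ Pp n k ε := by
  constructor
  · intro h
    by_contra hP
    unfold Pp at hP
    push_neg at hP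
    obtain ⟨j0, hj0k, hj0⟩ := hP
    have hsub : (univ.filter fun j : Fin n => ∀ k : Fin n, (k:ℕ) ≤ (j:ℕ) → ε k = true)
        ⊆ (univ.filter fun j : Fin n => (j:ℕ) < (j0:ℕ)) := by
      intro j hj
      rw [Finset.mem_filter] at hj ⊢
      refine ⟨Finset.mem_univ _, ?_⟩
      by_contra hc
      push_neg at hc
      have := hj.2 j0 hc
      rw [this] at hj0
      simp at hj0
    have := Finset.card_le_card hsub
    rw [card_filter_lt' n (j0:ℕ) (le_of_lt j0.isLt)] at this
    unfold Mm at h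
    omega
  · intro hP
    have hsub : (univ.filter fun j : Fin n => (j:ℕ) ≤ k)
        ⊆ (univ.filter fun j : Fin n => ∀ k : Fin n, (k:ℕ) ≤ (j:ℕ) → ε k = true) := by
      intro j hj
      rw [Finset.mem_filter] at hj ⊢
      refine ⟨Finset.mem_univ _, fun k' hk' => hP k' (le_trans hk' hj.2)⟩
    have := Finset.card_le_card hsub
    rw [card_filter_le' n k hk] at this
    unfold Mm
    omega

/-- key per-point bound -/
lemma per_eps (n : ℕ) (ε : Fin n → Bool) :
    ∑ k ∈ Finset.range n, (if Pp n k ε then (2:ℝ)^k else 0)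
      ≤ ∑ δ : Fin n → Bool, |Uu n δ ε| := by
  have h1 : ∑ k ∈ Finset.range n, (if Pp n k ε then (2:ℝ)^k else 0)
      = ∑ k ∈ Finset.range (Mm n ε), (2:ℝ)^k := by
    rw [← Finset.sum_filter]
    congr 1
    ext k
    simp only [Finset.mem_filter, Finset.mem_range]
    constructor
    · rintro ⟨hkn, hp⟩; exact (lt_Mm_iff n ε k hkn).mpr hp
    · intro hkM
      have hkn : k < n := lt_of_lt_of_le hkM (Mm_le n ε)
      exact ⟨hkn, (lt_Mm_iff n ε k hkn).mp hkM⟩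
  rw [h1]
  rcases Nat.eq_zero_or_pos (Mm n ε) with hM | hM
  · rw [hM]
    simp only [Finset.range_zero, Finset.sum_empty]
    exact Finset.sum_nonneg fun δ _ => abs_nonneg _
  · have hMn : Mm n ε - 1 < n := by have := Mm_le n ε; omega
    set t : Fin n := ⟨Mm n ε - 1, hMn⟩ with ht
    have hPt : Pp n (t : ℕ) ε := (lt_Mm_iff n ε (Mm n ε - 1) hMn).mp (by omega)
    have hpair := pairing n ε t hPt
    have hgeom : ∑ k ∈ Finset.range (Mm n ε), (2:ℝ)^k = 2 ^ (Mm n ε) - 1 := by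
      rw [geom_sum_eq (by norm_num : (2:ℝ) ≠ 1)]
      norm_num
    rw [hgeom]
    have htM : (t : ℕ) + 1 = Mm n ε := by simp only [ht]; omega
    rw [htM] at hpair
    linarith

lemma total_bound (n : ℕ) :
    (n:ℝ) * 2^(n-1) ≤ ∑ ε : Fin n → Bool, ∑ δ : Fin n → Bool, |Uu n δ ε| := by
  have step1 : ∀ k ∈ Finset.range n,
      ∑ ε : Fin n → Bool, (if Pp n k ε then (2:ℝ)^k else 0) = 2^(n-1) := by
    intro k hk
    rw [Finset.mem_range] at hk
    rw [Finset.sum_ite, Finset.sum_const_zero, add_zero, Finset.sum_const]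
    rw [prefix_count' n k hk, nsmul_eq_mul]
    push_cast
    rw [← pow_add]
    congr 1
    omega
  calc (n:ℝ) * 2^(n-1)
      = ∑ k ∈ Finset.range n, ∑ ε : Fin n → Bool, (if Pp n k ε then (2:ℝ)^k else 0) := by
        rw [Finset.sum_congr rfl step1, Finset.sum_const, Finset.card_range, nsmul_eq_mul]
    _ = ∑ ε : Fin n → Bool, ∑ k ∈ Finset.range n, (if Pp n k ε then (2:ℝ)^k else 0) :=
        Finset.sum_comm
    _ ≤ ∑ ε : Fin n → Bool, ∑ δ : Fin n → Bool, |Uu n δ ε| :=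
        Finset.sum_le_sum fun ε _ => per_eps n ε

lemma rhs_norm (n : ℕ) (δ : Fin n → Bool) :
    cubeLpNorm n 1 (fun ε => ∑ i : Fin n, sgn (δ i) • hh n ε)
      = ((2:ℝ)^n)⁻¹ * |∑ i : Fin n, sgn (δ i)| := by
  unfold cubeLpNorm
  rw [show ((1:ℝ)/1) = 1 by norm_num, Real.rpow_one]
  congr 1
  calc ∑ ε : Fin n → Bool, ‖∑ i : Fin n, sgn (δ i) • hh n ε‖ ^ (1:ℝ)
      = ∑ ε : Fin n → Bool, |∑ i : Fin n, sgn (δ i)| * hh n ε := by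
        refine Finset.sum_congr rfl fun ε _ => ?_
        rw [Real.rpow_one, Real.norm_eq_abs, ← Finset.sum_smul, smul_eq_mul, abs_mul]
        congr 1
        unfold hh; split_ifs <;> norm_num
    _ = |∑ i : Fin n, sgn (δ i)| := by
        rw [← Finset.mul_sum]
        have : ∑ ε : Fin n → Bool, hh n ε = 1 := by
          unfold hh
          rw [Finset.sum_ite_eq' Finset.univ (allT n) (fun _ => (1:ℝ))]
          simp
        rw [this, mul_one]

lemma lhs_norm (n : ℕ) (δ : Fin n → Bool) :
    cubeLpNorm n 1 (fun ε => ∑ i : Fin n, sgn (δ i) • Ei n ((i:ℕ)+1) (hh n) ε)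
      = ((2:ℝ)^n)⁻¹ * ∑ ε : Fin n → Bool, |Uu n δ ε| := by
  unfold cubeLpNorm
  rw [show ((1:ℝ)/1) = 1 by norm_num, Real.rpow_one]
  congr 1
  refine Finset.sum_congr rfl fun ε _ => ?_
  rw [Real.rpow_one, Real.norm_eq_abs]
  congr 1
  unfold Uu
  refine Finset.sum_congr rfl fun i _ => ?_
  rw [Ei_hh, smul_eq_mul]

/-- Dualized Stein example: there is a universal `c > 0` such that for every `n` there are
`h₁,…,hₙ : 𝒞_n → ℝ` with
`2⁻ⁿ Σ_δ ‖Σᵢ δᵢ𝔈ᵢhᵢ‖_{L₁} ≥ c√n · 2⁻ⁿ Σ_δ ‖Σᵢ δᵢhᵢ‖_{L₁} > 0`. -/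
theorem stein_example_L1_dual :
    ∃ c : ℝ, 0 < c ∧ ∀ n : ℕ, 0 < n →
      ∃ h : Fin n → (Fin n → Bool) → ℝ,
        (((2 : ℝ) ^ n)⁻¹ * ∑ δ : Fin n → Bool,
            cubeLpNorm n 1 fun ε => ∑ i : Fin n, sgn (δ i) • Ei n ((i : ℕ) + 1) (h i) ε)
          ≥ c * Real.sqrt n * (((2 : ℝ) ^ n)⁻¹ * ∑ δ : Fin n → Bool,
            cubeLpNorm n 1 fun ε => ∑ i : Fin n, sgn (δ i) • h i ε) ∧
        0 < ((2 : ℝ) ^ n)⁻¹ * ∑ δ : Fin n → Bool,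
            cubeLpNorm n 1 fun ε => ∑ i : Fin n, sgn (δ i) • h i ε := by
  
  refine ⟨1/2, by norm_num, fun n hn => ⟨fun _ => hh n, ?_, ?_⟩⟩
  · have hrw1 : ∀ δ : Fin n → Bool,
        cubeLpNorm n 1 (fun ε => ∑ i : Fin n, sgn (δ i) • Ei n ((i:ℕ)+1) ((fun _ => hh n) i) ε)
          = ((2:ℝ)^n)⁻¹ * ∑ ε : Fin n → Bool, |Uu n δ ε| := fun δ => lhs_norm n δ
    have hrw2 : ∀ δ : Fin n → Bool,
        cubeLpNorm n 1 (fun ε => ∑ i : Fin n, sgn (δ i) • (fun _ : Fin n => hh n) i ε)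
          = ((2:ℝ)^n)⁻¹ * |∑ i : Fin n, sgn (δ i)| := fun δ => rhs_norm n δ
    rw [Finset.sum_congr rfl (fun δ _ => hrw1 δ), Finset.sum_congr rfl (fun δ _ => hrw2 δ)]
    rw [← Finset.mul_sum, ← Finset.mul_sum]
    set R := ((2:ℝ)^n)⁻¹ with hR
    have hRpos : 0 < R := by rw [hR]; positivity
    have hA : (n:ℝ) * 2^(n-1) ≤ ∑ δ : Fin n → Bool, ∑ ε : Fin n → Bool, |Uu n δ ε| := by
      rw [Finset.sum_comm]
      exact total_bound n
    have hB := sum_abs_S_le' n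
    have hs : Real.sqrt n * Real.sqrt n = (n:ℝ) := Real.mul_self_sqrt (by positivity)
    have h2n : (2:ℝ)^n = 2 * 2^(n-1) := by
      rw [← pow_succ']
      congr 1
      omega
    have hsqnn : (0:ℝ) ≤ Real.sqrt n := Real.sqrt_nonneg _
    rw [ge_iff_le]
    calc 1/2 * Real.sqrt n * (R * (R * ∑ δ : Fin n → Bool, |∑ i : Fin n, sgn (δ i)|))
        ≤ 1/2 * Real.sqrt n * (R * (R * (2^n * Real.sqrt n))) := by gcongr
      _ = R * (R * (1/2 * (Real.sqrt n * Real.sqrt n) * 2^n)) := by ring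
      _ = R * (R * (1/2 * (n:ℝ) * 2^n)) := by rw [hs]
      _ = R * (R * ((n:ℝ) * 2^(n-1))) := by rw [h2n]; ring
      _ ≤ R * (R * ∑ δ : Fin n → Bool, ∑ ε : Fin n → Bool, |Uu n δ ε|) := by gcongr
  · have hrw2 : ∀ δ : Fin n → Bool,
        cubeLpNorm n 1 (fun ε => ∑ i : Fin n, sgn (δ i) • (fun _ : Fin n => hh n) i ε)
          = ((2:ℝ)^n)⁻¹ * |∑ i : Fin n, sgn (δ i)| := fun δ => rhs_norm n δ
    rw [Finset.sum_congr rfl (fun δ _ => hrw2 δ)]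
    set R := ((2:ℝ)^n)⁻¹ with hR
    have hRpos : 0 < R := by rw [hR]; positivity
    have hnpos : (0:ℝ) < n := by exact_mod_cast hn
    have hval : (∑ i : Fin n, sgn (allT n i)) = (n:ℝ) := by simp [allT, sgn]
    have hle : R * |∑ i : Fin n, sgn (allT n i)|
        ≤ ∑ δ : Fin n → Bool, R * |∑ i : Fin n, sgn (δ i)| :=
      Finset.single_le_sum (f := fun δ : Fin n → Bool => R * |∑ i : Fin n, sgn (δ i)|)
        (fun δ _ => by positivity) (Finset.mem_univ (allT n))
    rw [hval, abs_of_pos hnpos] at hle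
    calc (0:ℝ) < R * (R * (n:ℝ)) := mul_pos hRpos (mul_pos hRpos hnpos)
      _ ≤ R * ∑ δ : Fin n → Bool, R * |∑ i : Fin n, sgn (δ i)| :=
          mul_le_mul_of_nonneg_left hle (le_of_lt hRpos)
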